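/- Let λ ∈ 𝔱_R* and assume (R2(λ)) holds. If χ : 𝔤_R → R is an R-linear map such that χ, viewed as an element of 𝔤_ℂ*, lies in 𝒱_{𝔤_ℂ} L_ℂ(λ), then χ ⊗ 1 ∈ 𝔤_𝕂* lies in 𝒱_{𝔤_𝕂} L_p(λ). -/

import Mathlib

/-!
Statement 13 (Proposition 3.7).  Let `𝔤_ℂ` be a simple complex Lie algebra with
Chevalley basis `ℬ = (b_1, …, b_k)` (structure constants in `R`), `R = 𝒮⁻¹ℤ` a
localisation of `ℤ` (encoded as a subring of `ℚ`) in which the prime `p` is not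
invertible, `𝕂` algebraically closed of characteristic `p`, `𝔤_R` the `R`-span of `ℬ`
and `𝔤_𝕂 = 𝔤_R ⊗_R 𝕂`.  Let `λ ∈ 𝔱_R*`, `L_ℂ(λ)` the simple highest weight module with
highest weight vector `v̄_λ`, `L_R(λ) = U(𝔤_R)v̄_λ` and `L_p(λ) = L_R(λ) ⊗_R 𝕂` (the
latter encoded by its generator `w̄_λ` together with the conditions that the PBW
monomials span and that the `𝕂`-linear relations among them are spanned by the
reductions of the `R`-linear relations in `L_R(λ)`).  Assume (R2(λ)):
`S(𝔤_R)/Ann_{S(𝔤_R)}(v̄_λ)` has no `R`-torsion.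

Claim: if the `R`-linear map `χ : 𝔤_R → R` (given by its values `χ i` on the basis)
lies, as an element of `𝔤_ℂ*`, in `𝒱_{𝔤_ℂ} L_ℂ(λ)`, then `χ ⊗ 1 ∈ 𝔤_𝕂*` lies in
`𝒱_{𝔤_𝕂} L_p(λ)`.  Associated varieties are zero loci of the annihilators of the
highest-weight generator in the associated graded module, expressed in the coordinates
attached to the basis `ℬ`.
-/


open Matrix

universe v

/-- The ordered PBW monomial `∏ f_i^{m i}` (product taken in the fixed linear order on
`ι`) built from a family of endomorphisms indexed by a basis of the Lie algebra; under
the PBW theorem these monomials applied to a cyclic vector span the module, and they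
realize the identification `gr U(𝔤) ≅ S(𝔤)`. -/
noncomputable def monAct {F : Type} [Field F] {M : Type v} [AddCommGroup M] [Module F M]
    {ι : Type} [Fintype ι] [LinearOrder ι]
    (f : ι → Module.End F M) (m : ι →₀ ℕ) : Module.End F M :=
  ((Finset.univ.sort (· ≤ ·)).map fun i => f i ^ m i).prod

/-- `filtLow f v n = L_{n-1}`, the `(n-1)`-st piece of the filtration
`L_n = U_n(𝔤)·v` induced by the PBW filtration (with `L_{-1} = 0`). -/
noncomputable def filtLow {F : Type} [Field F] {M : Type v} [AddCommGroup M] [Module F M]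
    {ι : Type} [Fintype ι] [LinearOrder ι]
    (f : ι → Module.End F M) (v : M) : ℕ → Submodule F M
  | 0 => ⊥
  | n + 1 => Submodule.span F
      {u | ∃ m : ι →₀ ℕ, (m.sum fun _ e => e) ≤ n ∧ u = monAct f m v}

/-- `s ∈ Ann_{S(𝔤)}(v̄)`: the polynomial `s ∈ S(𝔤) ≅ MvPolynomial ι F` annihilates the
class of the cyclic vector `v` in the associated graded module `gr L`: for every `n`,
the degree-`n` part of `s`, applied to `v` (via the PBW monomials), lies in `L_{n-1}`. -/
def annMem {F : Type} [Field F] {M : Type v} [AddCommGroup M] [Module F M]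
    {ι : Type} [Fintype ι] [LinearOrder ι]
    (f : ι → Module.End F M) (v : M) (s : MvPolynomial ι F) : Prop :=
  ∀ n : ℕ,
    (∑ m ∈ s.support.filter (fun m => (m.sum fun _ e => e) = n),
      s.coeff m • (monAct f m v)) ∈ filtLow f v n

/-- the embedding `R ⊆ ℚ ⊆ ℂ` for a subring `R` of `ℚ` (every localisation of `ℤ` at a
set of primes arises as such a subring). -/
noncomputable def ratToC {R : Subring ℚ} (cR : R) : ℂ := ((cR : ℚ) : ℂ)

/-- the R-form filtration `L_{R,n} = U_n(𝔤_R)·v̄` inside `L_ℂ(λ)`, as an additive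
subgroup (shifted: `filtRLow R f v n = L_{R,n-1}`, with `L_{R,-1} = 0`). -/
noncomputable def filtRLow (R : Subring ℚ) {M : Type v} [AddCommGroup M] [Module ℂ M]
    {ι : Type} [Fintype ι] [LinearOrder ι]
    (f : ι → Module.End ℂ M) (v : M) : ℕ → AddSubgroup M
  | 0 => ⊥
  | n + 1 => AddSubgroup.closure
      {u | ∃ (cR : R) (m : ι →₀ ℕ), (m.sum fun _ e => e) ≤ n ∧
        u = ratToC cR • monAct f m v}

/-- `s ∈ Ann_{S(𝔤_R)}(v̄)` for `s ∈ S(𝔤_R) ≅ MvPolynomial ι R`: each homogeneous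
component, applied to `v̄`, drops in the `R`-form filtration. -/
def annMemR (R : Subring ℚ) {M : Type v} [AddCommGroup M] [Module ℂ M]
    {ι : Type} [Fintype ι] [LinearOrder ι]
    (f : ι → Module.End ℂ M) (v : M) (s : MvPolynomial ι R) : Prop :=
  ∀ n : ℕ,
    (∑ m ∈ s.support.filter (fun m => (m.sum fun _ e => e) = n),
      ratToC (s.coeff m) • monAct f m v) ∈ filtRLow R f v n

namespace St13
set_option linter.unusedSectionVars false

open Finsupp

variable {ι : Type} [Fintype ι] [LinearOrder ι]

/-- total degree of a monomial exponent -/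
abbrev degm (m : ι →₀ ℕ) : ℕ := m.sum fun _ e => e

noncomputable def ratToCHom (R : Subring ℚ) : R →+* ℂ where
  toFun := ratToC
  map_one' := by simp [ratToC]
  map_mul' x y := by simp [ratToC]
  map_zero' := by simp [ratToC]
  map_add' x y := by simp [ratToC]

lemma ratToC_inj {R : Subring ℚ} : Function.Injective (ratToC (R := R)) := by
  intro a b h
  have : ((a : ℚ) : ℂ) = ((b : ℚ) : ℂ) := h
  exact Subtype.ext (by exact_mod_cast this)

lemma ratToC_eq_zero {R : Subring ℚ} {a : R} (h : ratToC a = 0) : a = 0 :=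
  ratToC_inj (R := R) (by simpa [ratToC] using h)

lemma monAct_zero {F : Type} [Field F] {M : Type} [AddCommGroup M] [Module F M]
    (f : ι → Module.End F M) : monAct f (0 : ι →₀ ℕ) = 1 := by
  unfold monAct
  apply List.prod_eq_one
  intro x hx
  simp only [List.mem_map] at hx
  obtain ⟨i, -, rfl⟩ := hx
  simp

/-- degree zero means the zero exponent -/
lemma degm_eq_zero {m : ι →₀ ℕ} (h : degm m = 0) : m = 0 := by
  ext i
  by_cases hi : i ∈ m.support
  · have : m i ≤ degm m := Finset.single_le_sum (fun _ _ => Nat.zero_le _) hi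
    simp only [Finsupp.coe_zero, Pi.zero_apply]
    omega
  · simpa using Finsupp.notMem_support_iff.mp hi

noncomputable def ellF {F : Type} [Field F] {M : Type} [AddCommGroup M] [Module F M]
    (f : ι → Module.End F M) (w : M) (d : (ι →₀ ℕ) →₀ F) : M :=
  d.sum fun m c => c • monAct f m w

lemma ellF_add {F : Type} [Field F] {M : Type} [AddCommGroup M] [Module F M]
    (f : ι → Module.End F M) (w : M) (d₁ d₂ : (ι →₀ ℕ) →₀ F) :
    ellF f w (d₁ + d₂) = ellF f w d₁ + ellF f w d₂ :=
  Finsupp.sum_add_index' (fun _ => zero_smul _ _) (fun _ b₁ b₂ => add_smul b₁ b₂ _)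

noncomputable def ellFHom {F : Type} [Field F] {M : Type} [AddCommGroup M] [Module F M]
    (f : ι → Module.End F M) (w : M) : ((ι →₀ ℕ) →₀ F) →+ M :=
  AddMonoidHom.mk' (ellF f w) (ellF_add f w)

noncomputable def ellR {R : Subring ℚ} {M : Type} [AddCommGroup M] [Module ℂ M]
    (f : ι → Module.End ℂ M) (v : M) (e : (ι →₀ ℕ) →₀ R) : M :=
  e.sum fun m c => ratToC c • monAct f m v

lemma ellR_add {R : Subring ℚ} {M : Type} [AddCommGroup M] [Module ℂ M]
    (f : ι → Module.End ℂ M) (v : M) (e₁ e₂ : (ι →₀ ℕ) →₀ R) :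
    ellR f v (e₁ + e₂) = ellR f v e₁ + ellR f v e₂ := by
  refine Finsupp.sum_add_index' (fun _ => ?_) (fun m b₁ b₂ => ?_)
  · simp [ratToC]
  · rw [show ratToC (b₁ + b₂) = ratToC b₁ + ratToC b₂ by simp [ratToC], add_smul]

noncomputable def ellRHom {R : Subring ℚ} {M : Type} [AddCommGroup M] [Module ℂ M]
    (f : ι → Module.End ℂ M) (v : M) : ((ι →₀ ℕ) →₀ R) →+ M :=
  AddMonoidHom.mk' (ellR f v) (ellR_add f v)

lemma ellR_smul {R : Subring ℚ} {M : Type} [AddCommGroup M] [Module ℂ M]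
    (f : ι → Module.End ℂ M) (v : M) (c : R) (e : (ι →₀ ℕ) →₀ R) :
    ellR f v (c • e) = ratToC c • ellR f v e := by
  rw [ellR, Finsupp.sum_smul_index' (fun i => by simp [ratToC]), ellR, Finsupp.smul_sum]
  apply Finsupp.sum_congr
  intro m _
  rw [smul_eq_mul, show ratToC (c * (e m)) = ratToC c * ratToC (e m) by simp [ratToC], mul_smul]

lemma ellR_sub {R : Subring ℚ} {M : Type} [AddCommGroup M] [Module ℂ M]
    (f : ι → Module.End ℂ M) (v : M) (e₁ e₂ : (ι →₀ ℕ) →₀ R) :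
    ellR f v (e₁ - e₂) = ellR f v e₁ - ellR f v e₂ :=
  map_sub (ellRHom f v) e₁ e₂

lemma ellR_single {R : Subring ℚ} {M : Type} [AddCommGroup M] [Module ℂ M]
    (f : ι → Module.End ℂ M) (v : M) (m : ι →₀ ℕ) (c : R) :
    ellR f v (Finsupp.single m c) = ratToC c • monAct f m v :=
  Finsupp.sum_single_index (by simp [ratToC])


/-- evaluation at `χ` of the degree-`n` homogeneous layer of a "polynomial" given
as a finitely supported family of coefficients. -/
noncomputable def evQ {A : Type} [CommRing A] (χ : ι → A) (n : ℕ) (e : (ι →₀ ℕ) →₀ A) : A :=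
  e.sum fun m c => if degm m = n then c * m.prod (fun i x => χ i ^ x) else 0

lemma evQ_add {A : Type} [CommRing A] (χ : ι → A) (n : ℕ) (e₁ e₂ : (ι →₀ ℕ) →₀ A) :
    evQ χ n (e₁ + e₂) = evQ χ n e₁ + evQ χ n e₂ := by
  refine Finsupp.sum_add_index' (fun a => by simp) (fun a b₁ b₂ => ?_)
  by_cases h : degm a = n <;> simp [h, add_mul]

noncomputable def evQHom {A : Type} [CommRing A] (χ : ι → A) (n : ℕ) :
    ((ι →₀ ℕ) →₀ A) →+ A :=
  AddMonoidHom.mk' (evQ χ n) (evQ_add χ n)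

lemma evQ_smul {A : Type} [CommRing A] (χ : ι → A) (n : ℕ) (c : A) (e : (ι →₀ ℕ) →₀ A) :
    evQ χ n (c • e) = c * evQ χ n e := by
  rw [evQ, Finsupp.sum_smul_index' (fun i => by simp), evQ, Finsupp.mul_sum]
  apply Finsupp.sum_congr
  intro m _
  by_cases h : degm m = n <;> simp [h, smul_eq_mul, mul_assoc]

/-- a finitely supported coefficient family as a polynomial -/
noncomputable def toPoly {A : Type} [CommRing A] (e : (ι →₀ ℕ) →₀ A) : MvPolynomial ι A :=
  e.sum fun m c => MvPolynomial.monomial m c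

lemma toPoly_coeff {A : Type} [CommRing A] (e : (ι →₀ ℕ) →₀ A) (m : ι →₀ ℕ) :
    (toPoly e).coeff m = e m := by
  rw [toPoly, Finsupp.sum, MvPolynomial.coeff_sum]
  rw [Finset.sum_congr rfl (fun x _ => MvPolynomial.coeff_monomial m x (e x))]
  rw [Finset.sum_ite_eq' e.support m (fun x => e x)]
  by_cases h : m ∈ e.support
  · simp [h]
  · simp [h, Finsupp.notMem_support_iff.mp h]

lemma toPoly_support {A : Type} [CommRing A] (e : (ι →₀ ℕ) →₀ A) :
    (toPoly e).support = e.support := by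
  ext m
  simp [MvPolynomial.mem_support_iff, toPoly_coeff, Finsupp.mem_support_iff]

lemma toPoly_eval {A : Type} [CommRing A] (χ : ι → A) (e : (ι →₀ ℕ) →₀ A) :
    MvPolynomial.eval χ (toPoly e) = e.sum fun m c => c * m.prod (fun i x => χ i ^ x) := by
  rw [toPoly, Finsupp.sum, map_sum]
  exact Finset.sum_congr rfl fun m _ => MvPolynomial.eval_monomial

lemma evQ_eq_eval_layer {A : Type} [CommRing A] (χ : ι → A) (n : ℕ) (e : (ι →₀ ℕ) →₀ A) :
    evQ χ n e = MvPolynomial.eval χ (toPoly (e.filter fun m => degm m = n)) := by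
  classical
  rw [toPoly_eval, evQ, Finsupp.sum, Finsupp.sum, Finsupp.support_filter, Finset.sum_filter]
  apply Finset.sum_congr rfl
  intro m hm
  by_cases h : degm m = n
  · simp [h, Finsupp.filter_apply_pos _ _ h]
  · simp [h]

lemma mem_filtLow_succ_iff {F : Type} [Field F] {M : Type} [AddCommGroup M] [Module F M]
    (f : ι → Module.End F M) (w : M) (n : ℕ) (x : M) :
    x ∈ filtLow f w (n + 1) ↔
      ∃ d : (ι →₀ ℕ) →₀ F, (∀ m ∈ d.support, degm m ≤ n) ∧ x = ellF f w d := by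
  constructor
  · intro hx
    induction hx using Submodule.span_induction with
    | mem u hu =>
      obtain ⟨m, hm, rfl⟩ := hu
      refine ⟨Finsupp.single m 1, ?_, ?_⟩
      · intro m' hm'
        have := Finsupp.support_single_subset hm'
        simp only [Finset.mem_singleton] at this
        subst this; exact hm
      · rw [ellF, Finsupp.sum_single_index (by simp), one_smul]
    | zero => exact ⟨0, by simp, by simp [ellF]⟩
    | add x y hx hy ihx ihy =>
      obtain ⟨d₁, h₁, rfl⟩ := ihx
      obtain ⟨d₂, h₂, rfl⟩ := ihy
      refine ⟨d₁ + d₂, ?_, (ellF_add f w d₁ d₂).symm⟩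
      intro m hm
      rcases Finset.mem_union.mp (Finsupp.support_add hm) with h | h
      exacts [h₁ m h, h₂ m h]
    | smul c x hx ihx =>
      obtain ⟨d, h₁, rfl⟩ := ihx
      have key : ellF f w (c • d) = c • ellF f w d := by
        rw [ellF, Finsupp.sum_smul_index' (fun i => by simp), ellF, Finsupp.smul_sum]
        apply Finsupp.sum_congr
        intro m _
        rw [smul_eq_mul, mul_smul]
      refine ⟨c • d, ?_, key.symm⟩
      intro m hm
      exact h₁ m (Finsupp.support_smul hm)
  · rintro ⟨d, hd, rfl⟩
    rw [ellF, Finsupp.sum]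
    apply Submodule.sum_mem
    intro m hm
    exact Submodule.smul_mem _ _ (Submodule.subset_span ⟨m, hd m hm, rfl⟩)

lemma mem_filtRLow_succ_iff {R : Subring ℚ} {M : Type} [AddCommGroup M] [Module ℂ M]
    (f : ι → Module.End ℂ M) (v : M) (n : ℕ) (x : M) :
    x ∈ filtRLow R f v (n + 1) ↔
      ∃ e : (ι →₀ ℕ) →₀ R, (∀ m ∈ e.support, degm m ≤ n) ∧ x = ellR f v e := by
  constructor
  · intro hx
    induction hx using AddSubgroup.closure_induction with
    | mem u hu =>
      obtain ⟨c, m, hm, rfl⟩ := hu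
      refine ⟨Finsupp.single m c, ?_, (ellR_single f v m c).symm⟩
      intro m' hm'
      have := Finsupp.support_single_subset hm'
      simp only [Finset.mem_singleton] at this
      subst this; exact hm
    | zero => exact ⟨0, by simp, by simp [ellR]⟩
    | add x y hx hy ihx ihy =>
      obtain ⟨d₁, h₁, rfl⟩ := ihx
      obtain ⟨d₂, h₂, rfl⟩ := ihy
      refine ⟨d₁ + d₂, ?_, (ellR_add f v d₁ d₂).symm⟩
      intro m hm
      rcases Finset.mem_union.mp (Finsupp.support_add hm) with h | h
      exacts [h₁ m h, h₂ m h]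
    | neg x hx ihx =>
      obtain ⟨d, h₁, rfl⟩ := ihx
      refine ⟨-d, ?_, ?_⟩
      · intro m hm
        rw [Finsupp.support_neg] at hm
        exact h₁ m hm
      · exact (map_neg (ellRHom f v) d).symm
  · rintro ⟨e, he, rfl⟩
    rw [ellR, Finsupp.sum]
    apply AddSubgroup.sum_mem
    intro m hm
    exact AddSubgroup.subset_closure ⟨e m, m, he m hm, rfl⟩

lemma filtRLow_le {R : Subring ℚ} {M : Type} [AddCommGroup M] [Module ℂ M]
    (f : ι → Module.End ℂ M) (v : M) :
    ∀ n : ℕ, ∀ x ∈ filtRLow R f v n, x ∈ filtLow f v n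
  | 0 => by
    intro x hx
    simp only [filtRLow, AddSubgroup.mem_bot] at hx
    simp [filtLow, hx]
  | n + 1 => by
    intro x hx
    rw [mem_filtRLow_succ_iff] at hx
    obtain ⟨e, he, rfl⟩ := hx
    rw [ellR, Finsupp.sum]
    apply Submodule.sum_mem
    intro m hm
    exact Submodule.smul_mem _ _ (Submodule.subset_span ⟨m, he m hm, rfl⟩)

lemma ellR_filter {R : Subring ℚ} {M : Type} [AddCommGroup M] [Module ℂ M]
    (f : ι → Module.End ℂ M) (v : M) (e : (ι →₀ ℕ) →₀ R) (P : (ι →₀ ℕ) → Prop)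
    [DecidablePred P] :
    ellR f v (e.filter P) = ∑ m ∈ e.support.filter P, ratToC (e m) • monAct f m v := by
  rw [ellR, Finsupp.sum, Finsupp.support_filter]
  apply Finset.sum_congr rfl
  intro m hm
  rw [Finsupp.filter_apply_pos _ _ (Finset.mem_filter.mp hm).2]

/-- The top-degree layer of a relation annihilates the highest weight vector in the
associated graded module over `R`. -/
lemma ann_top_layer {R : Subring ℚ} {M : Type} [AddCommGroup M] [Module ℂ M]
    (f : ι → Module.End ℂ M) (v : M) (hv0 : v ≠ 0) (e : (ι →₀ ℕ) →₀ R) (N : ℕ)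
    (hrel : ellR f v e = 0) (hdeg : ∀ m ∈ e.support, degm m ≤ N) :
    annMemR R f v (toPoly (e.filter fun m => degm m = N)) := by
  classical
  intro n
  by_cases hn : n = N
  · subst hn
    -- the support of the layer polynomial
    have hset : (toPoly (e.filter fun m => degm m = n)).support.filter
        (fun m => (m.sum fun _ x => x) = n) = e.support.filter (fun m => degm m = n) := by
      rw [toPoly_support, Finsupp.support_filter, Finset.filter_filter]
      apply Finset.filter_congr
      intro m _
      constructor
      · exact fun h => h.1
      · exact fun h => ⟨h, h⟩
    rw [hset]
    have hcoeff : ∀ m ∈ e.support.filter (fun m => degm m = n),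
        ratToC ((toPoly (e.filter fun m => degm m = n)).coeff m) • monAct f m v
          = ratToC (e m) • monAct f m v := by
      intro m hm
      rw [toPoly_coeff, Finsupp.filter_apply_pos (fun m => degm m = n) e (Finset.mem_filter.mp hm).2]
    rw [Finset.sum_congr rfl hcoeff]
    rcases Nat.eq_zero_or_pos n with hn0 | hn0
    · -- degree zero: the relation forces the coefficient at 0 to vanish
      subst hn0
      have hsupp : e.support ⊆ {0} := by
        intro m hm
        have h1 := hdeg m hm
        simp [degm_eq_zero (Nat.le_zero.mp h1)]
      have hrel0 : ratToC (e 0) • v = 0 := by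
        have he : e = Finsupp.single 0 (e 0) := Finsupp.support_subset_singleton.mp hsupp
        have := hrel
        rw [he] at this
        rw [ellR_single, monAct_zero] at this
        simpa using this
      have he0 : e 0 = 0 := by
        rcases smul_eq_zero.mp hrel0 with h | h
        · exact ratToC_eq_zero h
        · exact absurd h hv0
      have : e.support.filter (fun m => degm m = 0) = ∅ := by
        apply Finset.filter_eq_empty_iff.mpr
        intro m hm
        have hm0 := hsupp hm
        simp only [Finset.mem_singleton] at hm0
        subst hm0
        exact absurd (Finsupp.mem_support_iff.mp hm) (by simpa using he0)
      rw [this, Finset.sum_empty]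
      exact zero_mem _
    · -- positive degree: move the lower-order terms to the other side
      obtain ⟨n', rfl⟩ : ∃ n', n = n' + 1 := ⟨n - 1, by omega⟩
      have hsplit := Finset.sum_filter_add_sum_filter_not e.support
        (fun m => degm m = n' + 1) (fun m => ratToC (e m) • monAct f m v)
      have hX : ellR f v (e.filter fun m => ¬ degm m = n' + 1) ∈ filtRLow R f v (n' + 1) := by
        rw [mem_filtRLow_succ_iff]
        refine ⟨_, ?_, rfl⟩
        intro m hm
        rw [Finsupp.support_filter, Finset.mem_filter] at hm
        have := hdeg m hm.1
        have h2 := hm.2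
        omega
      have hrel' : (∑ m ∈ e.support.filter (fun m => degm m = n' + 1),
          ratToC (e m) • monAct f m v)
          = - ellR f v (e.filter fun m => ¬ degm m = n' + 1) := by
        rw [ellR_filter]
        have h0 : ellR f v e = 0 := hrel
        rw [ellR, Finsupp.sum, ← hsplit] at h0
        exact eq_neg_of_add_eq_zero_left h0
      rw [hrel']
      exact neg_mem hX
  · -- other degrees: the sum is empty
    have : (toPoly (e.filter fun m => degm m = N)).support.filter
        (fun m => (m.sum fun _ x => x) = n) = ∅ := by
      apply Finset.filter_eq_empty_iff.mpr
      intro m hm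
      rw [toPoly_support, Finsupp.support_filter, Finset.mem_filter] at hm
      simpa [hm.2] using hn ∘ Eq.symm ∘ (hm.2 ▸ id)
    rw [this, Finset.sum_empty]
    exact zero_mem _

/-- If `s` annihilates `v̄` in the `R`-form, then `χ ∈ 𝒱 L_ℂ(λ)` kills `s` (over `R`). -/
lemma annMemR_eval_eq_zero {R : Subring ℚ} {M : Type} [AddCommGroup M] [Module ℂ M]
    (f : ι → Module.End ℂ M) (v : M) (χ : ι → R)
    (hχ : ∀ s : MvPolynomial ι ℂ, annMem f v s →
      MvPolynomial.eval (fun i => ratToC (χ i)) s = 0)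
    (s : MvPolynomial ι R) (hs : annMemR R f v s) : MvPolynomial.eval χ s = 0 := by
  have hinj : Function.Injective ⇑(ratToCHom R) := ratToC_inj
  have hsupp : (MvPolynomial.map (ratToCHom R) s).support = s.support :=
    MvPolynomial.support_map_of_injective s hinj
  have hann : annMem f v (MvPolynomial.map (ratToCHom R) s) := by
    intro n
    rw [hsupp]
    have hsum : (∑ m ∈ s.support.filter (fun m => (m.sum fun _ x => x) = n),
        (MvPolynomial.map (ratToCHom R) s).coeff m • monAct f m v)
        = ∑ m ∈ s.support.filter (fun m => (m.sum fun _ x => x) = n),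
          ratToC (s.coeff m) • monAct f m v := by
      apply Finset.sum_congr rfl
      intro m _
      rw [MvPolynomial.coeff_map]
      rfl
    rw [hsum]
    exact filtRLow_le f v n _ (hs n)
  have h1 := hχ _ hann
  have h2 : MvPolynomial.eval (fun i => ratToC (χ i)) (MvPolynomial.map (ratToCHom R) s)
      = ratToCHom R (MvPolynomial.eval χ s) := by
    rw [MvPolynomial.eval_map]
    exact (MvPolynomial.eval₂_comp_left (ratToCHom R) (RingHom.id R) χ s).symm
  rw [h2] at h1
  exact ratToC_eq_zero h1

/-- every element of a subring of `ℚ` is an integer times a unit, with denominator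
prime to any non-invertible prime -/
lemma subring_repr (R : Subring ℚ) {p : ℕ} (hp : p.Prime) (hpR : ¬ IsUnit (p : R)) (x : R) :
    ∃ (a : ℤ) (b : ℕ) (u : R), ¬ (p ∣ b) ∧ ((b : ℕ) : R) * u = 1 ∧ x = (a : R) * u := by
  set q : ℚ := (x : ℚ) with hq
  have hbQ : ((q.den : ℚ)) ≠ 0 := by exact_mod_cast q.den_nz
  have hco : IsCoprime (q.num) ((q.den : ℕ) : ℤ) := by
    rw [Int.isCoprime_iff_gcd_eq_one]
    simpa [Int.gcd] using q.reduced
  obtain ⟨uc, vc, huv⟩ := hco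
  set u : R := (uc : R) * x + (vc : R) with hu
  have huval : (u : ℚ) = 1 / (q.den : ℚ) := by
    have h1 : (u : ℚ) = (uc : ℚ) * q + (vc : ℚ) := by push_cast [hu]; ring
    have h2 : q * q.den = q.num := Rat.mul_den_eq_num q
    rw [h1, eq_div_iff hbQ]
    calc ((uc : ℚ) * q + vc) * q.den = uc * (q * q.den) + vc * q.den := by ring
    _ = ((uc * q.num + vc * q.den : ℤ) : ℚ) := by rw [h2]; push_cast; ring
    _ = 1 := by rw [huv]; norm_num
  have hbu : ((q.den : ℕ) : R) * u = 1 := by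
    apply Subtype.ext
    push_cast [huval]
    field_simp
  have hxu : x = (q.num : R) * u := by
    apply Subtype.ext
    push_cast [huval]
    rw [mul_one_div, Rat.num_div_den]
  refine ⟨q.num, q.den, u, ?_, hbu, hxu⟩
  intro hpd
  obtain ⟨b', hb'⟩ := hpd
  apply hpR
  refine IsUnit.of_mul_eq_one ((b' : R) * u) ?_
  rw [← hbu, hb']
  push_cast
  ring

lemma ker_phi {K : Type} [Field K] {p : ℕ} [Fact p.Prime] [CharP K p]
    (R : Subring ℚ) (hpR : ¬ IsUnit (p : R)) (φ : R →+* K)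
    (x : R) (hx : φ x = 0) : ∃ y : R, x = (p : R) * y := by
  obtain ⟨a, b, u, hpb, hbu, hxa⟩ := subring_repr R Fact.out hpR x
  have hu : IsUnit u := IsUnit.of_mul_eq_one _ ((mul_comm _ _).trans hbu)
  have hφu : φ u ≠ 0 := (hu.map φ).ne_zero
  have h1 : φ ((a : R)) = 0 := by
    rw [hxa, _root_.map_mul] at hx
    rcases mul_eq_zero.mp hx with h | h
    · exact h
    · exact absurd h hφu
  rw [map_intCast] at h1
  obtain ⟨a', rfl⟩ := (CharP.intCast_eq_zero_iff K p a).mp h1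
  refine ⟨(a' : R) * u, ?_⟩
  rw [hxa]
  push_cast
  ring

lemma phi_int_image {K : Type} [Field K] {p : ℕ} [Fact p.Prime] [CharP K p]
    (R : Subring ℚ) (hpR : ¬ IsUnit (p : R)) (φ : R →+* K)
    (x : R) : ∃ z : ℤ, φ x = (z : K) := by
  obtain ⟨a, b, u, hpb, hbu, hxa⟩ := subring_repr R Fact.out hpR x
  have hp : p.Prime := Fact.out
  have hbK : ((b : ℕ) : K) ≠ 0 := fun h => hpb ((CharP.cast_eq_zero_iff K p b).mp h)
  have hco : IsCoprime ((b : ℕ) : ℤ) ((p : ℕ) : ℤ) := by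
    rw [Int.isCoprime_iff_gcd_eq_one]
    simpa [Int.gcd, Nat.coprime_comm] using (Nat.Prime.coprime_iff_not_dvd hp).mpr hpb
  obtain ⟨sc, tc, hst⟩ := hco
  have hbφu : ((b : ℕ) : K) * φ u = 1 := by
    have := congrArg φ hbu
    rw [_root_.map_mul, _root_.map_one, map_natCast] at this
    exact this
  have hbs : ((b : ℕ) : K) * ((sc : ℤ) : K) = 1 := by
    have := congrArg (fun z : ℤ => (z : K)) hst
    push_cast at this
    rw [CharP.cast_eq_zero K p] at this
    calc ((b : ℕ) : K) * ((sc : ℤ) : K) = (sc : K) * (b : K) + (tc : K) * 0 := by ring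
    _ = 1 := by rw [← this]
  have hu_eq : φ u = ((sc : ℤ) : K) := mul_left_cancel₀ hbK (hbφu.trans hbs.symm)
  refine ⟨a * sc, ?_⟩
  rw [hxa, _root_.map_mul, map_intCast, hu_eq]
  push_cast
  ring

lemma ellR_finset_sum {R : Subring ℚ} {M : Type} [AddCommGroup M] [Module ℂ M]
    (f : ι → Module.End ℂ M) (v : M) {γ : Type} (S : Finset γ)
    (h : γ → ((ι →₀ ℕ) →₀ R)) :
    ellR f v (∑ j ∈ S, h j) = ∑ j ∈ S, ellR f v (h j) :=
  map_sum (ellRHom f v) h S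

lemma evQ_finset_sum {A : Type} [CommRing A] (χ : ι → A) (n : ℕ) {γ : Type} (S : Finset γ)
    (h : γ → ((ι →₀ ℕ) →₀ A)) :
    evQ χ n (∑ j ∈ S, h j) = ∑ j ∈ S, evQ χ n (h j) :=
  map_sum (evQHom χ n) h S

lemma finset_sum_smul_apply {R : Subring ℚ} {γ : Type} (S : Finset γ) (c : γ → R)
    (E : γ → ((ι →₀ ℕ) →₀ R)) (m : ι →₀ ℕ) :
    (∑ j ∈ S, c j • E j) m = ∑ j ∈ S, c j * (E j) m := by
  rw [Finset.sum_apply']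
  apply Finset.sum_congr rfl
  intro j _
  rw [Finsupp.smul_apply, smul_eq_mul]

/-- The image under `φ` of `evQ` as a sum over any superset of the support. -/
lemma phi_evQ_eq {K : Type} [Field K] {R : Subring ℚ} (φ : R →+* K) (χ : ι → R) (n : ℕ)
    (e : (ι →₀ ℕ) →₀ R) (W : Finset (ι →₀ ℕ)) (hW : e.support ⊆ W) :
    φ (evQ χ n e) = ∑ m ∈ W, if degm m = n then φ (e m) * m.prod (fun i x => φ (χ i) ^ x) else 0 := by
  classical
  rw [evQ, Finsupp.sum, map_sum]
  rw [Finset.sum_subset hW]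
  · apply Finset.sum_congr rfl
    intro m _
    rw [apply_ite φ, map_zero, _root_.map_mul]
    congr 1
    congr 1
    rw [Finsupp.prod, Finsupp.prod, map_prod]
    apply Finset.prod_congr rfl
    intro i _
    rw [map_pow]
  · intro m _ hm
    rw [Finsupp.notMem_support_iff.mp hm]
    simp

lemma phi_evQ_congr {K : Type} [Field K] {R : Subring ℚ} (φ : R →+* K) (χ : ι → R) (n : ℕ)
    (G g : (ι →₀ ℕ) →₀ R) (h : ∀ m, φ (G m) = φ (g m)) :
    φ (evQ χ n G) = φ (evQ χ n g) := by
  classical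
  rw [phi_evQ_eq φ χ n G (G.support ∪ g.support) Finset.subset_union_left,
    phi_evQ_eq φ χ n g (G.support ∪ g.support) Finset.subset_union_right]
  apply Finset.sum_congr rfl
  intro m _
  rw [h m]

/-- Gaussian-type descent to the prime field: a `K`-linear combination of reductions of
`R`-tuples can be rewritten with integral coefficient matrix. -/
lemma field_descent {K : Type} [Field K] {p : ℕ} [Fact p.Prime] [CharP K p]
    (R : Subring ℚ) (hpR : ¬ IsUnit (p : R)) (φ : R →+* K)
    (γ : Type) (S : Finset γ) (a : γ → K) :
    ∃ (γ' : Type) (T : Finset γ') (b : γ' → K) (cz : γ → γ' → R),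
      (∀ x : γ → R, (∑ t ∈ T, b t * φ (∑ j ∈ S, cz j t * x j)) = ∑ j ∈ S, a j * φ (x j)) ∧
      (∀ x : γ → R, (∑ j ∈ S, a j * φ (x j)) = 0 →
        ∀ t, φ (∑ j ∈ S, cz j t * x j) = 0) := by
  classical
  letI : Algebra (ZMod p) K := (ZMod.castHom (dvd_refl p) K).toAlgebra
  have hψnat : ∀ z : ℕ, algebraMap (ZMod p) K ((z : ℕ) : ZMod p) = ((z : ℕ) : K) :=
    fun z => map_natCast _ z
  have hψint : ∀ z : ℤ, algebraMap (ZMod p) K ((z : ℤ) : ZMod p) = ((z : ℤ) : K) :=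
    fun z => map_intCast _ z
  have hval : ∀ z : ZMod p, ((z.val : ℕ) : K) = algebraMap (ZMod p) K z := by
    intro z
    rw [← hψnat z.val]
    exact congrArg _ (ZMod.natCast_rightInverse z)
  set B := Module.Basis.ofVectorSpace (ZMod p) K with hB
  refine ⟨_, S.biUnion (fun j => (B.repr (a j)).support), fun t => B t,
    fun j t => (((B.repr (a j)) t).val : R), ?_, ?_⟩
  · -- (reconstruction)
    intro x
    have key : ∀ j ∈ S, a j = ∑ t ∈ S.biUnion (fun j => (B.repr (a j)).support),
        (((B.repr (a j) t).val : ℕ) : K) * B t := by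
      intro j hj
      have h0 := B.linearCombination_repr (a j)
      rw [Finsupp.linearCombination_apply, Finsupp.sum] at h0
      calc a j = ∑ t ∈ (B.repr (a j)).support, (B.repr (a j)) t • B t := h0.symm
      _ = ∑ t ∈ S.biUnion (fun j => (B.repr (a j)).support), (B.repr (a j)) t • B t :=
        Finset.sum_subset
          (Finset.subset_biUnion_of_mem (fun j => (B.repr (a j)).support) hj)
          (fun t _ ht => by rw [Finsupp.notMem_support_iff.mp ht, zero_smul])
      _ = _ := Finset.sum_congr rfl (fun t _ => by rw [Algebra.smul_def, ← hval])
    calc ∑ t ∈ S.biUnion (fun j => (B.repr (a j)).support),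
          B t * φ (∑ j ∈ S, ((((B.repr (a j)) t).val : ℕ) : R) * x j)
        = ∑ t ∈ S.biUnion (fun j => (B.repr (a j)).support),
          ∑ j ∈ S, (((B.repr (a j) t).val : ℕ) : K) * φ (x j) * B t := by
          apply Finset.sum_congr rfl
          intro t _
          rw [map_sum, Finset.mul_sum]
          apply Finset.sum_congr rfl
          intro j _
          rw [_root_.map_mul, map_natCast]
          ring
    _ = ∑ j ∈ S, ∑ t ∈ S.biUnion (fun j => (B.repr (a j)).support),
          (((B.repr (a j) t).val : ℕ) : K) * φ (x j) * B t := Finset.sum_comm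
    _ = ∑ j ∈ S, a j * φ (x j) := by
          apply Finset.sum_congr rfl
          intro j hj
          conv_rhs => rw [key j hj]
          rw [Finset.sum_mul]
          apply Finset.sum_congr rfl
          intro t _
          ring
  · -- (vanishing propagates to fibers)
    intro x hx t
    choose z hz using fun j => phi_int_image R hpR φ (x j)
    have h0 : (∑ j ∈ S, ((z j : ZMod p)) • a j) = 0 := by
      rw [← hx]
      apply Finset.sum_congr rfl
      intro j _
      rw [Algebra.smul_def, hψint, ← hz j, mul_comm]
    have h1 : (∑ j ∈ S, ((z j : ZMod p)) • B.repr (a j)) = 0 := by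
      calc ∑ j ∈ S, (z j : ZMod p) • B.repr (a j)
          = B.repr (∑ j ∈ S, (z j : ZMod p) • a j) := by
            rw [map_sum]
            apply Finset.sum_congr rfl
            intro j _
            exact (_root_.map_smul B.repr ((z j : ZMod p)) (a j)).symm
      _ = 0 := by rw [h0, map_zero]
    have h2 : (∑ j ∈ S, (z j : ZMod p) * (B.repr (a j)) t) = 0 := by
      have h1t := congrArg (fun gg : _ →₀ ZMod p => gg t) h1
      simpa [Finset.sum_apply', Finsupp.smul_apply, smul_eq_mul] using h1t
    have h3 := congrArg (algebraMap (ZMod p) K) h2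
    rw [map_sum, map_zero] at h3
    rw [map_sum]
    calc ∑ j ∈ S, φ (((((B.repr (a j)) t).val : ℕ) : R) * x j)
        = ∑ j ∈ S, algebraMap (ZMod p) K ((z j : ZMod p) * (B.repr (a j)) t) := by
          apply Finset.sum_congr rfl
          intro j _
          rw [_root_.map_mul, _root_.map_mul, map_natCast, hval, hψint, ← hz j, mul_comm]
    _ = 0 := h3

/-- lowering the degree of a relation whose top layer reduces to zero mod `p`,
using torsion-freeness (R2). -/
lemma lower_relation {K : Type} [Field K] {p : ℕ} [Fact p.Prime] [CharP K p]
    (R : Subring ℚ) (hpR : ¬ IsUnit (p : R)) (φ : R →+* K)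
    {M : Type} [AddCommGroup M] [Module ℂ M]
    (f : ι → Module.End ℂ M) (v : M) (hv0 : v ≠ 0)
    (hR2 : ∀ cR : R, cR ≠ 0 → ∀ s : MvPolynomial ι R,
      annMemR R f v (MvPolynomial.C cR * s) → annMemR R f v s)
    (N : ℕ) (g : (ι →₀ ℕ) →₀ R)
    (hrel : ellR f v g = 0) (hdeg : ∀ m ∈ g.support, degm m ≤ N + 1)
    (htop : ∀ m, degm m = N + 1 → φ (g m) = 0) :
    ∃ G : (ι →₀ ℕ) →₀ R, ellR f v G = 0 ∧ (∀ m ∈ G.support, degm m ≤ N)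
      ∧ (∀ m, φ (G m) = φ (g m)) := by
  classical
  have hp : p.Prime := Fact.out
  have hpR0 : ((p : ℕ) : R) ≠ 0 := by
    intro h
    have h2 : (((p : ℕ) : R) : ℚ) = 0 := by rw [h]; simp
    push_cast at h2
    exact hp.ne_zero (by exact_mod_cast h2)
  -- divide the top layer by p
  have hdivL : ∀ m, ∃ y : R, (Finsupp.filter (fun m => degm m = N + 1) g) m = (p : R) * y := by
    intro m
    by_cases hm : degm m = N + 1
    · rw [Finsupp.filter_apply_pos (fun m => degm m = N + 1) g hm]
      exact ker_phi R hpR φ (g m) (htop m hm)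
    · refine ⟨0, ?_⟩
      rw [Finsupp.filter_apply_neg (fun m => degm m = N + 1) g hm, mul_zero]
  choose y hy using hdivL
  have hy0 : ∀ m, (Finsupp.filter (fun m => degm m = N + 1) g) m = 0 → y m = 0 := by
    intro m h0
    have := hy m
    rw [h0] at this
    rcases mul_eq_zero.mp this.symm with h | h
    · exact absurd h hpR0
    · exact h
  set u : (ι →₀ ℕ) →₀ R := Finsupp.onFinset (Finsupp.filter (fun m => degm m = N + 1) g).support y
    (fun m hm => by
      by_contra hns
      exact hm (hy0 m (Finsupp.notMem_support_iff.mp hns))) with hu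
  have hu_apply : ∀ m, u m = y m := fun m => rfl
  have hpu : ∀ m, (p : R) * u m = (Finsupp.filter (fun m => degm m = N + 1) g) m := by
    intro m
    rw [hu_apply, ← hy]
  have hu_deg : ∀ m ∈ u.support, degm m = N + 1 := by
    intro m hm
    have h1 := Finsupp.support_onFinset_subset hm
    rw [Finsupp.support_filter, Finset.mem_filter] at h1
    exact h1.2
  -- R2 applies: `C p * toPoly u` is the annihilating top layer
  have hCpu : MvPolynomial.C ((p : ℕ) : R) * toPoly u
      = toPoly (Finsupp.filter (fun m => degm m = N + 1) g) := by
    apply MvPolynomial.ext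
    intro m
    rw [MvPolynomial.coeff_C_mul, toPoly_coeff, toPoly_coeff]
    exact hpu m
  have hann_u : annMemR R f v (toPoly u) := by
    apply hR2 _ hpR0
    rw [hCpu]
    exact ann_top_layer f v hv0 g (N + 1) hrel hdeg
  -- hence `ellR u` lies in the R-form filtration of level N+1
  have hu_ell : ellR f v u ∈ filtRLow R f v (N + 1) := by
    have h := hann_u (N + 1)
    have hsum : (∑ m ∈ (toPoly u).support.filter (fun m => (m.sum fun _ x => x) = N + 1),
        ratToC ((toPoly u).coeff m) • monAct f m v) = ellR f v u := by
      rw [toPoly_support, Finset.filter_true_of_mem (fun m hm => hu_deg m hm)]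
      apply Finset.sum_congr rfl
      intro m _
      rw [toPoly_coeff]
    rwa [hsum] at h
  rw [mem_filtRLow_succ_iff] at hu_ell
  obtain ⟨yy, hyy_deg, hyy⟩ := hu_ell
  refine ⟨g - (p : R) • u + (p : R) • yy, ?_, ?_, ?_⟩
  · rw [ellR_add, ellR_sub, ellR_smul, ellR_smul, hrel, ← hyy]
    abel
  · intro m hm
    by_contra hgt
    push_neg at hgt
    apply Finsupp.mem_support_iff.mp hm
    have hyy0 : yy m = 0 := by
      by_contra h0
      have := hyy_deg m (Finsupp.mem_support_iff.mpr h0)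
      omega
    have hcoord : (g - (p : R) • u + (p : R) • yy) m
        = g m - (p : R) * u m + (p : R) * yy m := by
      simp [Finsupp.add_apply, Finsupp.sub_apply, Finsupp.smul_apply, smul_eq_mul]
    rw [hcoord, hyy0, mul_zero, add_zero, hpu m]
    by_cases hm1 : degm m = N + 1
    · rw [Finsupp.filter_apply_pos (fun m => degm m = N + 1) g hm1, sub_self]
    · have hg0 : g m = 0 := by
        by_contra h0
        have := hdeg m (Finsupp.mem_support_iff.mpr h0)
        omega
      rw [Finsupp.filter_apply_neg (fun m => degm m = N + 1) g hm1, hg0, sub_zero]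
  · intro m
    have hcoord : (g - (p : R) • u + (p : R) • yy) m
        = g m - (p : R) * u m + (p : R) * yy m := by
      simp [Finsupp.add_apply, Finsupp.sub_apply, Finsupp.smul_apply, smul_eq_mul]
    rw [hcoord, map_add, map_sub, _root_.map_mul, _root_.map_mul, map_natCast,
      CharP.cast_eq_zero K p, zero_mul, zero_mul, sub_zero, add_zero]

/-- The downward induction on the degree bound of the relation family. -/
lemma main_induction {K : Type} [Field K] {p : ℕ} [Fact p.Prime] [CharP K p]
    (R : Subring ℚ) (hpR : ¬ IsUnit (p : R)) (φ : R →+* K)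
    {M : Type} [AddCommGroup M] [Module ℂ M]
    (f : ι → Module.End ℂ M) (v : M) (hv0 : v ≠ 0)
    (hR2 : ∀ cR : R, cR ≠ 0 → ∀ s : MvPolynomial ι R,
      annMemR R f v (MvPolynomial.C cR * s) → annMemR R f v s)
    (χ : ι → R)
    (hχ : ∀ s : MvPolynomial ι ℂ, annMem f v s →
      MvPolynomial.eval (fun i => ratToC (χ i)) s = 0)
    (n : ℕ) :
    ∀ (N : ℕ) (γ : Type) (S : Finset γ) (a : γ → K) (E : γ → ((ι →₀ ℕ) →₀ R)),
      (∀ j ∈ S, ellR f v (E j) = 0) →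
      (∀ j ∈ S, ∀ m ∈ (E j).support, degm m ≤ N) →
      (∀ m : ι →₀ ℕ, n < degm m → (∑ j ∈ S, a j * φ ((E j) m)) = 0) →
      (∑ j ∈ S, a j * φ (evQ χ n (E j))) = 0 := by
  have hbase : ∀ e : (ι →₀ ℕ) →₀ R, ellR f v e = 0 →
      (∀ m ∈ e.support, degm m ≤ n) → evQ χ n e = 0 := by
    intro e hrel hdeg
    rw [evQ_eq_eval_layer]
    exact annMemR_eval_eq_zero f v χ hχ _ (ann_top_layer f v hv0 e n hrel hdeg)
  intro N
  induction N with
  | zero =>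
    intro γ S a E hrel hdeg _
    refine Finset.sum_eq_zero fun j hj => ?_
    rw [hbase (E j) (hrel j hj) (fun m hm => le_trans (hdeg j hj m hm) (Nat.zero_le n)),
      map_zero, mul_zero]
  | succ N IH =>
    intro γ S a E hrel hdeg hhi
    by_cases hNn : N + 1 ≤ n
    · refine Finset.sum_eq_zero fun j hj => ?_
      rw [hbase (E j) (hrel j hj) (fun m hm => le_trans (hdeg j hj m hm) hNn),
        map_zero, mul_zero]
    · push_neg at hNn
      obtain ⟨γ', T, b, cz, hrec, hvan⟩ := field_descent R hpR φ γ S a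
      have hg_rel : ∀ t, ellR f v (∑ j ∈ S, cz j t • E j) = 0 := by
        intro t
        rw [ellR_finset_sum]
        refine Finset.sum_eq_zero fun j hj => ?_
        rw [ellR_smul, hrel j hj, smul_zero]
      have hg_deg : ∀ t, ∀ m ∈ (∑ j ∈ S, cz j t • E j).support, degm m ≤ N + 1 := by
        intro t m hm
        by_contra hgt
        push_neg at hgt
        apply Finsupp.mem_support_iff.mp hm
        rw [finset_sum_smul_apply]
        refine Finset.sum_eq_zero fun j hj => ?_
        have h0 : (E j) m = 0 := by
          by_contra h0
          have := hdeg j hj m (Finsupp.mem_support_iff.mpr h0)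
          omega
        rw [h0, mul_zero]
      have hg_top : ∀ t, ∀ m, degm m = N + 1 → φ ((∑ j ∈ S, cz j t • E j) m) = 0 := by
        intro t m hm
        rw [finset_sum_smul_apply]
        exact hvan (fun j => (E j) m) (hhi m (by omega)) t
      choose G hG_rel hG_deg hG_phi using fun t =>
        lower_relation R hpR φ f v hv0 hR2 N (∑ j ∈ S, cz j t • E j)
          (hg_rel t) (hg_deg t) (hg_top t)
      have hG_hi : ∀ m : ι →₀ ℕ, n < degm m → (∑ t ∈ T, b t * φ ((G t) m)) = 0 := by
        intro m hm
        calc ∑ t ∈ T, b t * φ ((G t) m)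
            = ∑ t ∈ T, b t * φ (∑ j ∈ S, cz j t * (E j) m) := by
              apply Finset.sum_congr rfl
              intro t _
              rw [hG_phi t m, finset_sum_smul_apply]
        _ = ∑ j ∈ S, a j * φ ((E j) m) := hrec (fun j => (E j) m)
        _ = 0 := hhi m hm
      have hfin := IH γ' T b G (fun t _ => hG_rel t) (fun t _ => hG_deg t) hG_hi
      calc ∑ j ∈ S, a j * φ (evQ χ n (E j))
          = ∑ t ∈ T, b t * φ (∑ j ∈ S, cz j t * evQ χ n (E j)) :=
            (hrec (fun j => evQ χ n (E j))).symm
      _ = ∑ t ∈ T, b t * φ (evQ χ n (∑ j ∈ S, cz j t • E j)) := by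
            apply Finset.sum_congr rfl
            intro t _
            congr 1
            apply congrArg
            rw [evQ_finset_sum]
            exact Finset.sum_congr rfl fun j _ => (evQ_smul χ n (cz j t) (E j)).symm
      _ = ∑ t ∈ T, b t * φ (evQ χ n (G t)) := by
            apply Finset.sum_congr rfl
            intro t _
            rw [phi_evQ_congr φ χ n (G t) _ (hG_phi t)]
      _ = 0 := hfin

end St13

open St13

/-- Proposition 3.7: if `χ ∈ 𝒱_{𝔤_ℂ} L_ℂ(λ)` then
`χ ⊗ 1 ∈ 𝒱_{𝔤_𝕂} L_p(λ)`, assuming (R2(λ)). -/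
theorem statement13 {K : Type} [Field K] [IsAlgClosed K] {p : ℕ} [Fact p.Prime]
    [CharP K p]
    -- R = 𝒮⁻¹ℤ ⊆ ℚ with p not invertible in R, and the reduction map φ : R → 𝕂
    (R : Subring ℚ) (hpR : ¬ IsUnit (p : R)) (φ : R →+* K)
    -- the Chevalley basis ℬ of 𝔤_ℂ, of size k, with structure constants c over R
    (k : ℕ) (c : Fin k → Fin k → Fin k → R)
    -- the simple highest weight module L_ℂ(λ): fC i is the action of the basis vector bᵢ
    (LC : Type) [AddCommGroup LC] [Module ℂ LC] (fC : Fin k → Module.End ℂ LC)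
    (hCbr : ∀ i j, fC i * fC j - fC j * fC i = ∑ l, ratToC (c i j l) • fC l)
    (v : LC) (hv0 : v ≠ 0)
    -- highest-weight data: positive-part indices kill v, Cartan indices act via λ ∈ 𝔱_R*
    (posIdx cartIdx : Finset (Fin k)) (lam : Fin k → R)
    (hw_pos : ∀ i ∈ posIdx, fC i v = 0)
    (hw_cart : ∀ i ∈ cartIdx, fC i v = ratToC (lam i) • v)
    (hsimple : ∀ W : Submodule ℂ LC, (∀ i, ∀ u ∈ W, fC i u ∈ W) → W = ⊥ ∨ W = ⊤)
    -- L_p(λ) = L_R(λ) ⊗_R 𝕂, with generator w̄_λ and action fK of the reduced basis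
    (LK : Type) [AddCommGroup LK] [Module K LK] (fK : Fin k → Module.End K LK)
    (hKbr : ∀ i j, fK i * fK j - fK j * fK i = ∑ l, φ (c i j l) • fK l)
    (w : LK)
    (hKgen : Submodule.span K {u | ∃ m : Fin k →₀ ℕ, u = monAct fK m w} = ⊤)
    -- base change: the 𝕂-linear relations among the PBW monomials applied to w̄_λ are
    -- spanned by the reductions of the R-linear relations among those applied to v̄_λ
    (hBC : ∀ d : (Fin k →₀ ℕ) →₀ K,
      (d.sum fun m cc => cc • monAct fK m w) = 0 ↔
      d ∈ Submodule.span K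
        {d' | ∃ e : (Fin k →₀ ℕ) →₀ R,
          (e.sum fun m cR => ratToC cR • monAct fC m v) = 0 ∧
          d' = e.mapRange (fun cR => φ cR) (map_zero φ)})
    -- assumption (R2(λ)): S(𝔤_R)/Ann_{S(𝔤_R)}(v̄_λ) has no R-torsion
    (hR2 : ∀ cR : R, cR ≠ 0 → ∀ s : MvPolynomial (Fin k) R,
      annMemR R fC v (MvPolynomial.C cR * s) → annMemR R fC v s)
    -- χ : 𝔤_R → R, via its values on the basis, assumed to lie in 𝒱_{𝔤_ℂ} L_ℂ(λ)
    (χ : Fin k → R)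
    (hχ : ∀ s : MvPolynomial (Fin k) ℂ, annMem fC v s →
      MvPolynomial.eval (fun i => ratToC (χ i)) s = 0) :
    -- conclusion: χ ⊗ 1 lies in 𝒱_{𝔤_𝕂} L_p(λ)
    ∀ s : MvPolynomial (Fin k) K, annMem fK w s →
      MvPolynomial.eval (fun i => φ (χ i)) s = 0 := by
  classical
  intro s hs
  rw [MvPolynomial.eval_eq]
  rw [← Finset.sum_fiberwise_of_maps_to
    (t := s.support.image (fun m : Fin k →₀ ℕ => m.sum fun _ e => e))
    (g := fun m : Fin k →₀ ℕ => m.sum fun _ e => e)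
    (fun m hm => Finset.mem_image_of_mem _ hm)
    (fun m => MvPolynomial.coeff m s * ∏ i ∈ m.support, φ (χ i) ^ m i)]
  refine Finset.sum_eq_zero fun n _ => ?_
  -- the (shifted-by-one) filtration member `d` of lower-degree corrections
  obtain ⟨d, hd_deg, hd_sum⟩ : ∃ d : (Fin k →₀ ℕ) →₀ K,
      (∀ m ∈ d.support, degm m < n) ∧
      ellF fK w d = ∑ m ∈ s.support.filter (fun m => (m.sum fun _ e => e) = n),
        MvPolynomial.coeff m s • monAct fK m w := by
    cases n with
    | zero =>
      refine ⟨0, by simp, ?_⟩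
      have h0 := hs 0
      rw [show filtLow fK w 0 = ⊥ from rfl, Submodule.mem_bot] at h0
      rw [h0]
      simp [ellF]
    | succ n' =>
      obtain ⟨d, h1, h2⟩ := (mem_filtLow_succ_iff fK w n' _).mp (hs (n' + 1))
      exact ⟨d, fun m hm => by have := h1 m hm; omega, h2.symm⟩
  -- the degree-n coefficients of s, as a finsupp
  set snK : (Fin k →₀ ℕ) →₀ K := Finsupp.onFinset s.support
    (fun m => if (m.sum fun _ e => e) = n then MvPolynomial.coeff m s else 0)
    (fun m hm => MvPolynomial.mem_support_iff.mpr (by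
      intro h0
      apply hm
      simp [h0])) with hsnK_def
  have hsnK_apply : ∀ m, snK m
      = if (m.sum fun _ e => e) = n then MvPolynomial.coeff m s else 0 := fun m => rfl
  have hsnK_sum : ellF fK w snK
      = ∑ m ∈ s.support.filter (fun m => (m.sum fun _ e => e) = n),
        MvPolynomial.coeff m s • monAct fK m w := by
    rw [ellF, hsnK_def, Finsupp.onFinset_sum (g := fun m (c : K) => c • (monAct fK m) w) _ (fun a => zero_smul K _), Finset.sum_filter]
    apply Finset.sum_congr rfl
    intro m _
    split <;> simp
  -- the relation D among PBW monomials in L_p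
  have hD0 : ((snK - d).sum fun m cc => cc • monAct fK m w) = 0 := by
    have : ellF fK w (snK - d) = 0 := by
      rw [show ellF fK w (snK - d) = ellF fK w snK - ellF fK w d from
        map_sub (ellFHom fK w) snK d, hsnK_sum, hd_sum, sub_self]
    exact this
  have hD_mem := (hBC (snK - d)).mp hD0
  rw [Submodule.mem_span_set] at hD_mem
  obtain ⟨cf, hcf_supp, hcf_sum⟩ := hD_mem
  -- choose R-relation lifts
  have hE : ∀ x : {x // x ∈ cf.support}, ∃ e : (Fin k →₀ ℕ) →₀ R,
      (e.sum fun m cR => ratToC cR • monAct fC m v) = 0 ∧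
      (x : (Fin k →₀ ℕ) →₀ K) = e.mapRange (fun cR => φ cR) (map_zero φ) :=
    fun x => hcf_supp x.2
  choose E hE_rel hE_eq using hE
  -- coordinates of D
  have hDm : ∀ m, (snK - d) m = ∑ x ∈ cf.support.attach, cf x.1 * φ ((E x) m) := by
    intro m
    rw [← hcf_sum, Finsupp.sum]
    rw [← Finset.sum_attach cf.support (fun x => cf x • x)]
    rw [Finset.sum_apply']
    apply Finset.sum_congr rfl
    intro x _
    rw [Finsupp.smul_apply, smul_eq_mul, hE_eq x, Finsupp.mapRange_apply]
  have hD_val : ∀ m, (m.sum fun _ e => e) = n → (snK - d) m = MvPolynomial.coeff m s := by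
    intro m hm
    rw [Finsupp.sub_apply]
    have h1 : snK m = MvPolynomial.coeff m s := by rw [hsnK_apply]; simp [hm]
    have h2 : d m = 0 := by
      by_contra h0
      have := hd_deg m (Finsupp.mem_support_iff.mpr h0)
      rw [show degm m = (m.sum fun _ e => e) from rfl, hm] at this
      omega
    rw [h1, h2, sub_zero]
  have hhi0 : ∀ m : Fin k →₀ ℕ, n < degm m →
      (∑ x ∈ cf.support.attach, cf x.1 * φ ((E x) m)) = 0 := by
    intro m hm
    rw [← hDm m, Finsupp.sub_apply]
    have h1 : snK m = 0 := by rw [hsnK_apply]; simp [Nat.ne_of_gt hm]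
    have h2 : d m = 0 := by
      by_contra h0
      have := hd_deg m (Finsupp.mem_support_iff.mpr h0)
      omega
    rw [h1, h2, sub_zero]
  -- bound on degrees
  have hdeg0 : ∀ x ∈ cf.support.attach, ∀ m ∈ (E x).support,
      degm m ≤ cf.support.attach.sup (fun x => (E x).support.sup (fun m => degm m)) := by
    intro x hx m hm
    calc degm m ≤ (E x).support.sup (fun m => degm m) := Finset.le_sup hm
    _ ≤ _ := Finset.le_sup (f := fun x => (E x).support.sup (fun m => degm m)) hx
  -- the main induction kills the evaluations
  have HML := main_induction R hpR φ fC v hv0 hR2 χ hχ n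
    (cf.support.attach.sup (fun x => (E x).support.sup (fun m => degm m))) _ cf.support.attach
    (fun x => cf x.1) E (fun x _ => hE_rel x) hdeg0 hhi0
  -- supersets of supports
  set W := (s.support ∪ d.support) ∪ cf.support.attach.biUnion (fun x => (E x).support)
    with hW
  have hsubs : s.support ⊆ W := fun m hm =>
    Finset.mem_union_left _ (Finset.mem_union_left _ hm)
  have hsubE : ∀ x ∈ cf.support.attach, (E x).support ⊆ W := fun x hx m hm =>
    Finset.mem_union_right _ (Finset.mem_biUnion.mpr ⟨x, hx, hm⟩)
  -- assemble
  calc ∑ m ∈ s.support.filter (fun m => (m.sum fun _ e => e) = n),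
        MvPolynomial.coeff m s * ∏ i ∈ m.support, φ (χ i) ^ m i
      = ∑ m ∈ s.support.filter (fun m => (m.sum fun _ e => e) = n),
        (snK - d) m * ∏ i ∈ m.support, φ (χ i) ^ m i := by
        apply Finset.sum_congr rfl
        intro m hm
        rw [hD_val m (Finset.mem_filter.mp hm).2]
  _ = ∑ m ∈ W.filter (fun m => (m.sum fun _ e => e) = n),
        (snK - d) m * ∏ i ∈ m.support, φ (χ i) ^ m i := by
        apply Finset.sum_subset (Finset.filter_subset_filter _ hsubs)
        intro m hm hnm
        have hPm := (Finset.mem_filter.mp hm).2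
        have hc0 : MvPolynomial.coeff m s = 0 := by
          by_contra h0
          exact hnm (Finset.mem_filter.mpr ⟨MvPolynomial.mem_support_iff.mpr h0, hPm⟩)
        rw [hD_val m hPm, hc0, zero_mul]
  _ = ∑ m ∈ W.filter (fun m => (m.sum fun _ e => e) = n),
        ∑ x ∈ cf.support.attach, cf x.1 * (φ ((E x) m) * ∏ i ∈ m.support, φ (χ i) ^ m i) := by
        apply Finset.sum_congr rfl
        intro m _
        rw [hDm m, Finset.sum_mul]
        apply Finset.sum_congr rfl
        intro x _
        ring
  _ = ∑ x ∈ cf.support.attach,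
        ∑ m ∈ W.filter (fun m => (m.sum fun _ e => e) = n),
          cf x.1 * (φ ((E x) m) * ∏ i ∈ m.support, φ (χ i) ^ m i) := Finset.sum_comm
  _ = ∑ x ∈ cf.support.attach, cf x.1
        * ∑ m ∈ W.filter (fun m => (m.sum fun _ e => e) = n),
            φ ((E x) m) * ∏ i ∈ m.support, φ (χ i) ^ m i := by
        apply Finset.sum_congr rfl
        intro x _
        rw [Finset.mul_sum]
  _ = ∑ x ∈ cf.support.attach, cf x.1 * φ (evQ χ n (E x)) := by
        apply Finset.sum_congr rfl
        intro x hx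
        congr 1
        rw [phi_evQ_eq φ χ n (E x) W (hsubE x hx), Finset.sum_filter]
        rfl
  _ = 0 := HML
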